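/- Let n ≥ 1 and let Q and Q′ be real normal defining functions of dimension n, defining hypersurfaces M and M′ with complexifications ℳ and ℳ′. Assume M is of finite type at 0 (Q(z,χ,0) ≢ 0 near 0) and M′ is of infinite type at 0 (Q′(z,χ,0) ≡ 0 near 0). Then every HSPM ℋ = (f,g,f̃,g̃) sending (ℳ,0) into (ℳ′,0) satisfies g ≡ 0 and g̃ ≡ 0 near 0. Conversely, for any ℂ^n-valued holomorphic maps f(z,w) and f̃(χ,τ) defined near 0 with f(0) = f̃(0) = 0, the quadruple (f, 0, f̃, 0) is an HSPM sending (ℳ,0) into (ℳ′,0). -/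

import Mathlib

open Filter Topology Complex

namespace HSPMpaper

open Metric

variable {n : ℕ}

/-- Partial derivative of `F` in the `i`-th coordinate direction. -/
noncomputable def pd (i : Fin n) (F : (Fin n → ℂ) → ℂ) : (Fin n → ℂ) → ℂ :=
  fun z => fderiv ℂ F z (Pi.single i 1)

/-- Iterated partial derivative `∂^α` for a multi-index `α`. -/
noncomputable def mpd (α : Fin n → ℕ) (F : (Fin n → ℂ) → ℂ) : (Fin n → ℂ) → ℂ :=
  ((List.ofFn fun i : Fin n => (pd i)^[α i]).foldr (· ∘ ·) id) F

/-- Componentwise complex conjugation on `ℂⁿ`. -/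
def conjV (z : Fin n → ℂ) : Fin n → ℂ := fun i => starRingEnd ℂ (z i)

/-- The conjugate defining function `Q̄(χ,z,τ) = conj (Q (conj χ) (conj z) (conj τ))`. -/
def QBar (Q : (Fin n → ℂ) → (Fin n → ℂ) → ℂ → ℂ) : (Fin n → ℂ) → (Fin n → ℂ) → ℂ → ℂ :=
  fun χ z τ => starRingEnd ℂ (Q (conjV χ) (conjV z) (starRingEnd ℂ τ))

/-- `Q` is a normal defining function (of dimension `n`): holomorphic near the origin of
`ℂⁿ × ℂⁿ × ℂ` and satisfying `Q(0,χ,τ) = τ` and `Q(z,0,τ) = τ` near `0`. -/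
def IsNormalDF (Q : (Fin n → ℂ) → (Fin n → ℂ) → ℂ → ℂ) : Prop :=
  (∀ᶠ p in 𝓝 (0 : (Fin n → ℂ) × (Fin n → ℂ) × ℂ),
      AnalyticAt ℂ (fun q : (Fin n → ℂ) × (Fin n → ℂ) × ℂ => Q q.1 q.2.1 q.2.2) p) ∧
  (∀ᶠ p in 𝓝 (0 : (Fin n → ℂ) × (Fin n → ℂ) × ℂ),
      Q 0 p.2.1 p.2.2 = p.2.2 ∧ Q p.1 0 p.2.2 = p.2.2)

/-- `Q` is a real normal defining function: normal and `Q(z,χ,Q̄(χ,z,w)) = w` near `0`. -/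
def IsRealNormalDF (Q : (Fin n → ℂ) → (Fin n → ℂ) → ℂ → ℂ) : Prop :=
  IsNormalDF Q ∧
  ∀ᶠ p in 𝓝 (0 : (Fin n → ℂ) × (Fin n → ℂ) × ℂ),
    Q p.1 p.2.1 (QBar Q p.2.1 p.1 p.2.2) = p.2.2

/-- `(f,g,f̃,g̃)` is a holomorphic Segre preserving map sending `(ℳ,0)` into `(ℳ',0)`. -/
def IsHSPM (Q Q' : (Fin n → ℂ) → (Fin n → ℂ) → ℂ → ℂ)
    (f : (Fin n → ℂ) → ℂ → Fin n → ℂ) (g : (Fin n → ℂ) → ℂ → ℂ)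
    (ft : (Fin n → ℂ) → ℂ → Fin n → ℂ) (gt : (Fin n → ℂ) → ℂ → ℂ) : Prop :=
  (∀ᶠ p in 𝓝 (0 : (Fin n → ℂ) × ℂ), AnalyticAt ℂ (fun q : (Fin n → ℂ) × ℂ => f q.1 q.2) p) ∧
  (∀ᶠ p in 𝓝 (0 : (Fin n → ℂ) × ℂ), AnalyticAt ℂ (fun q : (Fin n → ℂ) × ℂ => g q.1 q.2) p) ∧
  (∀ᶠ p in 𝓝 (0 : (Fin n → ℂ) × ℂ), AnalyticAt ℂ (fun q : (Fin n → ℂ) × ℂ => ft q.1 q.2) p) ∧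
  (∀ᶠ p in 𝓝 (0 : (Fin n → ℂ) × ℂ), AnalyticAt ℂ (fun q : (Fin n → ℂ) × ℂ => gt q.1 q.2) p) ∧
  f 0 0 = 0 ∧ g 0 0 = 0 ∧ ft 0 0 = 0 ∧ gt 0 0 = 0 ∧
  ∀ᶠ p in 𝓝 (0 : (Fin n → ℂ) × (Fin n → ℂ) × ℂ),
    g p.1 (Q p.1 p.2.1 p.2.2) =
      Q' (f p.1 (Q p.1 p.2.1 p.2.2)) (ft p.2.1 p.2.2) (gt p.2.1 p.2.2)

/-- `M` is of finite type at `0`: `(z,χ) ↦ Q(z,χ,0)` does not vanish identically near `0`. -/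
def FiniteType (Q : (Fin n → ℂ) → (Fin n → ℂ) → ℂ → ℂ) : Prop :=
  ¬ ∀ᶠ p in 𝓝 (0 : (Fin n → ℂ) × (Fin n → ℂ)), Q p.1 p.2 0 = 0

/-- Jacobian matrix of `z ↦ f(z,0)` at `z`. -/
noncomputable def jacz (f : (Fin n → ℂ) → ℂ → Fin n → ℂ) (z : Fin n → ℂ) :
    Matrix (Fin n) (Fin n) ℂ :=
  Matrix.of fun i j => pd j (fun z' => f z' 0 i) z

/-- `ℋ` is Segre transversal to `ℳ'` at `0`: `∂g/∂w(0,0) ≠ 0`. -/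
noncomputable def SegreTransversal (g : (Fin n → ℂ) → ℂ → ℂ) : Prop :=
  deriv (fun w => g 0 w) 0 ≠ 0

/-- `ℋ` is totally Segre nondegenerate at `0`. -/
def TotallySegreNondeg (f ft : (Fin n → ℂ) → ℂ → Fin n → ℂ) : Prop :=
  (¬ ∀ᶠ z in 𝓝 (0 : Fin n → ℂ), (jacz f z).det = 0) ∧
  (¬ ∀ᶠ χ in 𝓝 (0 : Fin n → ℂ), (jacz ft χ).det = 0)

/-- `ℋ` is transversally null: `g ≡ 0` and `g̃ ≡ 0` near `0`. -/
def TransversallyNull (g gt : (Fin n → ℂ) → ℂ → ℂ) : Prop :=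
  (∀ᶠ p in 𝓝 (0 : (Fin n → ℂ) × ℂ), g p.1 p.2 = 0) ∧
  (∀ᶠ p in 𝓝 (0 : (Fin n → ℂ) × ℂ), gt p.1 p.2 = 0)

/-- The `k`-th coordinate direction in `ℂⁿ × ℂ`. -/
noncomputable def dirCT (n : ℕ) (k : Fin (n + 1)) : (Fin n → ℂ) × ℂ :=
  if h : (k : ℕ) < n then (Pi.single ⟨k, h⟩ 1, 0) else (0, 1)

/-- `M` is holomorphically nondegenerate at `0`: for some `K`, the map
`(χ,τ) ↦ (∂_z^α Q(0,χ,τ))_{|α| ≤ K}` has generic rank `n+1`. -/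
def HolNondeg (Q : (Fin n → ℂ) → (Fin n → ℂ) → ℂ → ℂ) : Prop :=
  ∃ K : ℕ, ∃ A : Fin (n + 1) → Fin n → ℕ, (∀ j, (∑ i, A j i) ≤ K) ∧
    ¬ ∀ᶠ p in 𝓝 (0 : (Fin n → ℂ) × ℂ),
      (Matrix.of fun j k : Fin (n + 1) =>
        fderiv ℂ (fun q : (Fin n → ℂ) × ℂ => mpd (A j) (fun z => Q z q.1 q.2) 0) p
          (dirCT n k)).det = 0

/-- `M` is of class `𝒞` at `0`: for some `K`, the map
`χ ↦ (∂_z^α Q(0,χ,0))_{|α| ≤ K}` has generic rank `n`. -/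
def ClassC (Q : (Fin n → ℂ) → (Fin n → ℂ) → ℂ → ℂ) : Prop :=
  ∃ K : ℕ, ∃ A : Fin n → Fin n → ℕ, (∀ j, (∑ i, A j i) ≤ K) ∧
    ¬ ∀ᶠ χ in 𝓝 (0 : Fin n → ℂ),
      (Matrix.of fun j k : Fin n =>
        pd k (fun χ' => mpd (A j) (fun z => Q z χ' 0) 0) χ).det = 0

/-- `M` is finitely nondegenerate at `0`: for some `K`, the vectors
`∂_χ ∂_z^α Q(0,0,0)`, `|α| ≤ K`, span `ℂⁿ`. -/
def FinNondeg (Q : (Fin n → ℂ) → (Fin n → ℂ) → ℂ → ℂ) : Prop :=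
  ∃ K : ℕ, Submodule.span ℂ
    {v : Fin n → ℂ | ∃ α : Fin n → ℕ, (∑ i, α i) ≤ K ∧
      v = fun i => pd i (fun χ => mpd α (fun z => Q z χ 0) 0) 0} = ⊤

/-- Full Jacobian matrix of `(z,w) ↦ (f(z,w), g(z,w))` at `p ∈ ℂⁿ × ℂ`. -/
noncomputable def jacFull (f : (Fin n → ℂ) → ℂ → Fin n → ℂ) (g : (Fin n → ℂ) → ℂ → ℂ)
    (p : (Fin n → ℂ) × ℂ) : Matrix (Fin (n + 1)) (Fin (n + 1)) ℂ :=
  Matrix.of fun i k =>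
    fderiv ℂ (fun q : (Fin n → ℂ) × ℂ => (Fin.snoc (f q.1 q.2) (g q.1 q.2) : Fin (n + 1) → ℂ) i) p (dirCT n k)

/-- The degree-`d` homogeneous term of the Taylor series of `φ` at `0`. -/
noncomputable def homogTerm (d : ℕ) (φ : (Fin n → ℂ) → ℂ) : (Fin n → ℂ) → ℂ :=
  fun z => iteratedFDeriv ℂ d φ 0 (fun _ => z) / (d.factorial : ℂ)

/-- The order of vanishing of `φ` at `0`. -/
noncomputable def vanishOrder (φ : (Fin n → ℂ) → ℂ) : ℕ :=
  sInf {d | homogTerm d φ ≠ 0}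


/-- Core analytic lemma: if `g(z, Q(z,χ,0)) ≡ 0` near `0`, `Q(·,·,0) ≢ 0` near `0`,
`Q(z,0,0) = 0`, then `g ≡ 0` near `0`. -/
lemma gzero_of_comp {n : ℕ}
    (g : (Fin n → ℂ) → ℂ → ℂ) (Q : (Fin n → ℂ) → (Fin n → ℂ) → ℂ → ℂ)
    (hg : ∀ᶠ p in 𝓝 (0 : (Fin n → ℂ) × ℂ),
      AnalyticAt ℂ (fun q : (Fin n → ℂ) × ℂ => g q.1 q.2) p)
    (hQa : ∀ᶠ p in 𝓝 (0 : (Fin n → ℂ) × (Fin n → ℂ) × ℂ),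
      AnalyticAt ℂ (fun q : (Fin n → ℂ) × (Fin n → ℂ) × ℂ => Q q.1 q.2.1 q.2.2) p)
    (hQn : ∀ᶠ p in 𝓝 (0 : (Fin n → ℂ) × (Fin n → ℂ) × ℂ), Q p.1 0 p.2.2 = p.2.2)
    (hFT : ¬ ∀ᶠ p in 𝓝 (0 : (Fin n → ℂ) × (Fin n → ℂ)), Q p.1 p.2 0 = 0)
    (hvan : ∀ᶠ p in 𝓝 (0 : (Fin n → ℂ) × (Fin n → ℂ)), g p.1 (Q p.1 p.2 0) = 0) :
    ∀ᶠ p in 𝓝 (0 : (Fin n → ℂ) × ℂ), g p.1 p.2 = 0 := by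
  obtain ⟨r1, hr1, Hg⟩ := Metric.eventually_nhds_iff_ball.1 hg
  obtain ⟨r2, hr2, HQ⟩ := Metric.eventually_nhds_iff_ball.1 (hQa.and hQn)
  obtain ⟨r3, hr3, Hv⟩ := Metric.eventually_nhds_iff_ball.1 hvan
  set R : ℝ := min r1 (min r2 r3) with hR
  have hRpos : 0 < R := lt_min hr1 (lt_min hr2 hr3)
  have hRr1 : R ≤ r1 := min_le_left _ _
  have hRr2 : R ≤ r2 := le_trans (min_le_right _ _) (min_le_left _ _)
  have hRr3 : R ≤ r3 := le_trans (min_le_right _ _) (min_le_right _ _)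
  -- main claim
  have claim : ∀ z : Fin n → ℂ, ‖z‖ < R / 2 →
      (∃ χ₁ : Fin n → ℂ, ‖χ₁‖ < R / 4 ∧ Q z χ₁ 0 ≠ 0) →
      ∀ w : ℂ, ‖w‖ < R / 2 → g z w = 0 := by
    intro z hz ⟨χ₁, hχ₁, hQne⟩ w hw
    -- the one-variable slice ψ
    set ψ : ℂ → ℂ := fun s => Q z (s • χ₁) 0 with hψ
    have hmem : ∀ s : ℂ, s ∈ ball (0 : ℂ) 2 →
        ((z, s • χ₁, (0:ℂ)) : (Fin n → ℂ) × (Fin n → ℂ) × ℂ) ∈ ball 0 r2 := by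
      intro s hs
      rw [mem_ball_zero_iff] at hs ⊢
      have h1 : ‖s • χ₁‖ < R / 2 := by
        calc ‖s • χ₁‖ = ‖s‖ * ‖χ₁‖ := norm_smul s χ₁
        _ ≤ 2 * ‖χ₁‖ := by nlinarith [norm_nonneg χ₁, norm_nonneg s]
        _ < R / 2 := by nlinarith
      have : ‖((z, s • χ₁, (0:ℂ)) : (Fin n → ℂ) × (Fin n → ℂ) × ℂ)‖
          = max ‖z‖ (max ‖s • χ₁‖ ‖(0:ℂ)‖) := by
        simp [Prod.norm_def]
      rw [this]
      have h0 : ‖(0:ℂ)‖ = 0 := norm_zero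
      rw [h0]
      apply max_lt (by linarith)
      apply max_lt (by linarith) (by linarith)
    have hψan : AnalyticOnNhd ℂ ψ (ball (0:ℂ) 2) := by
      intro s hs
      have hc : AnalyticAt ℂ (fun s : ℂ => ((z, s • χ₁, (0:ℂ)) :
          (Fin n → ℂ) × (Fin n → ℂ) × ℂ)) s := by
        apply analyticAt_const.prod
        apply AnalyticAt.prod ?_ analyticAt_const
        exact ((ContinuousLinearMap.id ℂ ℂ).smulRight χ₁).analyticAt s
      exact AnalyticAt.comp
        (f := fun s : ℂ => ((z, s • χ₁, (0:ℂ)) : (Fin n → ℂ) × (Fin n → ℂ) × ℂ))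
        (HQ _ (hmem s hs)).1 hc
    have hψ0 : ψ 0 = 0 := by
      have := (HQ _ (hmem 0 (by simp))).2
      simpa [hψ] using this
    have hψ1 : ψ 1 ≠ 0 := by simpa [hψ] using hQne
    have h12 : (1 : ℂ) ∈ ball (0:ℂ) 2 := by
      rw [mem_ball_zero_iff]; norm_num
    have h02 : (0 : ℂ) ∈ ball (0:ℂ) 2 := by simp
    -- ψ is not eventually zero near 0
    have hψnz : ∀ᶠ s in 𝓝[≠] (0:ℂ), ψ s ≠ 0 := by
      rcases (hψan 0 h02).eventually_eq_zero_or_eventually_ne_zero with h | h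
      · exfalso
        have := hψan.eqOn_zero_of_preconnected_of_eventuallyEq_zero
          (convex_ball (0:ℂ) 2).isPreconnected h02 (h.mono fun s hs => hs)
        exact hψ1 (this h12)
      · exact h
    -- the one-variable function φ w = g z w
    have hφan : AnalyticOnNhd ℂ (fun w : ℂ => g z w) (ball (0:ℂ) (R/2)) := by
      intro w' hw'
      rw [mem_ball_zero_iff] at hw'
      have hmem' : ((z, w') : (Fin n → ℂ) × ℂ) ∈ ball 0 r1 := by
        rw [mem_ball_zero_iff, Prod.norm_def]
        exact max_lt (by linarith) (by linarith)
      exact AnalyticAt.comp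
        (f := fun w : ℂ => ((z, w) : (Fin n → ℂ) × ℂ))
        (Hg _ hmem') (analyticAt_const.prod analyticAt_id)
    have h0R : (0:ℂ) ∈ ball (0:ℂ) (R/2) := by
      rw [mem_ball_zero_iff]; simpa using by linarith
    rcases (hφan 0 h0R).eventually_eq_zero_or_eventually_ne_zero with h | h
    · have := hφan.eqOn_zero_of_preconnected_of_eventuallyEq_zero
        (convex_ball (0:ℂ) (R/2)).isPreconnected h0R (h.mono fun s hs => hs)
      exact this (by rw [mem_ball_zero_iff]; exact hw)
    · exfalso
      -- ψ tends to 0 within punctured neighbourhood, values nonzero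
      have hψc : ContinuousAt ψ 0 := (hψan 0 h02).continuousAt
      have hT : Tendsto ψ (𝓝[≠] (0:ℂ)) (𝓝[≠] (0:ℂ)) := by
        rw [tendsto_nhdsWithin_iff]
        constructor
        · have := hψc.tendsto
          rw [hψ0] at this
          exact this.mono_left nhdsWithin_le_nhds
        · exact hψnz
      have h1' : ∀ᶠ s in 𝓝[≠] (0:ℂ), g z (ψ s) ≠ 0 := hT.eventually h
      have h2' : ∀ᶠ s in 𝓝[≠] (0:ℂ), g z (ψ s) = 0 := by
        have hball : ∀ᶠ s in 𝓝 (0:ℂ), g z (ψ s) = 0 := by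
          rw [Metric.eventually_nhds_iff_ball]
          refine ⟨min 2 (R / (4 * max ‖χ₁‖ 1)), ?_, ?_⟩
          · apply lt_min two_pos
            positivity
          · intro s hs
            rw [mem_ball_zero_iff] at hs
            have hs2 : ‖s‖ < 2 := lt_of_lt_of_le hs (min_le_left _ _)
            have hsm : ‖s • χ₁‖ < R / 2 := by
              have hle : ‖χ₁‖ ≤ max ‖χ₁‖ 1 := le_max_left _ _
              have h1m : (1:ℝ) ≤ max ‖χ₁‖ 1 := le_max_right _ _
              have hs' : ‖s‖ < R / (4 * max ‖χ₁‖ 1) :=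
                lt_of_lt_of_le hs (min_le_right _ _)
              calc ‖s • χ₁‖ = ‖s‖ * ‖χ₁‖ := norm_smul s χ₁
                _ ≤ ‖s‖ * max ‖χ₁‖ 1 := by
                    apply mul_le_mul_of_nonneg_left hle (norm_nonneg s)
                _ < (R / (4 * max ‖χ₁‖ 1)) * max ‖χ₁‖ 1 := by
                    apply mul_lt_mul_of_pos_right hs' (by positivity)
                _ = R / 4 := by field_simp
                _ < R / 2 := by linarith
            have hv' := Hv (z, s • χ₁) (by
              rw [mem_ball_zero_iff, Prod.norm_def]
              exact max_lt (by linarith) (by linarith))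
            simpa [hψ] using hv'
        exact hball.filter_mono nhdsWithin_le_nhds
      obtain ⟨s, h1s, h2s⟩ := (h1'.and h2').exists
      exact h1s h2s
  -- density of good z
  set G : Set (Fin n → ℂ) := {z | ∃ χ₁ : Fin n → ℂ, ‖χ₁‖ < R / 4 ∧ Q z χ₁ 0 ≠ 0} with hG
  have hdense : ∀ z₀ : Fin n → ℂ, ‖z₀‖ < R / 2 → z₀ ∈ closure G := by
    intro z₀ hz₀
    by_contra hnot
    rw [Metric.mem_closure_iff] at hnot
    push_neg at hnot
    obtain ⟨ε, hε, hsep⟩ := hnot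
    set ε' : ℝ := min ε (R / 2 - ‖z₀‖) with hε'
    have hε'pos : 0 < ε' := lt_min hε (by linarith)
    -- Q vanishes on ball(z₀,ε') × ball(0,R/4)
    have hzero : ∀ z ∈ ball z₀ ε', ∀ χ ∈ ball (0 : Fin n → ℂ) (R/4), Q z χ 0 = 0 := by
      intro z hzb χ hχb
      by_contra hne
      have hzG : z ∈ G := ⟨χ, mem_ball_zero_iff.1 hχb, hne⟩
      have := hsep z hzG
      rw [mem_ball] at hzb
      rw [dist_comm] at hzb
      exact absurd (lt_of_lt_of_le hzb (min_le_left _ _)) (not_lt.2 this)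
    -- identity theorem on W
    set q : (Fin n → ℂ) × (Fin n → ℂ) → ℂ := fun p => Q p.1 p.2 0 with hq
    set W : Set ((Fin n → ℂ) × (Fin n → ℂ)) := ball 0 (R/2) ×ˢ ball 0 (R/4) with hW
    have hqan : AnalyticOnNhd ℂ q W := by
      rintro ⟨a, b⟩ ⟨ha, hb⟩
      rw [mem_ball_zero_iff] at ha hb
      have hmem : ((a, b, (0:ℂ)) : (Fin n → ℂ) × (Fin n → ℂ) × ℂ) ∈ ball 0 r2 := by
        rw [mem_ball_zero_iff, Prod.norm_def, Prod.norm_def]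
        simp only [norm_zero]
        exact max_lt (by linarith) (max_lt (by linarith) (by linarith))
      exact AnalyticAt.comp
        (g := fun q : (Fin n → ℂ) × (Fin n → ℂ) × ℂ => Q q.1 q.2.1 q.2.2) (x := (a, b))
        (f := fun p : (Fin n → ℂ) × (Fin n → ℂ) =>
          ((p.1, p.2, (0:ℂ)) : (Fin n → ℂ) × (Fin n → ℂ) × ℂ))
        (HQ _ hmem).1 (analyticAt_fst.prod (analyticAt_snd.prod analyticAt_const))
    have hWpc : IsPreconnected W :=
      ((convex_ball (0 : Fin n → ℂ) (R/2)).prod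
        (convex_ball (0 : Fin n → ℂ) (R/4))).isPreconnected
    have hz₀W : ((z₀, 0) : (Fin n → ℂ) × (Fin n → ℂ)) ∈ W :=
      ⟨mem_ball_zero_iff.2 hz₀, mem_ball_self (by positivity)⟩
    have hev0 : q =ᶠ[𝓝 ((z₀, 0) : (Fin n → ℂ) × (Fin n → ℂ))] 0 := by
      have hmemnhds : (ball z₀ ε' ×ˢ ball (0 : Fin n → ℂ) (R/4)) ∈
          𝓝 ((z₀, 0) : (Fin n → ℂ) × (Fin n → ℂ)) := by
        apply prod_mem_nhds
        · exact ball_mem_nhds _ hε'pos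
        · exact ball_mem_nhds _ (by positivity)
      filter_upwards [hmemnhds] with p hp
      exact hzero p.1 hp.1 p.2 hp.2
    have hEq0 := hqan.eqOn_zero_of_preconnected_of_eventuallyEq_zero hWpc hz₀W hev0
    apply hFT
    have hWnhds : W ∈ 𝓝 (0 : (Fin n → ℂ) × (Fin n → ℂ)) := by
      apply prod_mem_nhds <;> exact ball_mem_nhds _ (by positivity)
    filter_upwards [hWnhds] with p hp
    exact hEq0 hp
  -- conclusion
  rw [Metric.eventually_nhds_iff_ball]
  refine ⟨R/2, by positivity, ?_⟩
  rintro ⟨z₀, w₀⟩ hp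
  rw [mem_ball_zero_iff, Prod.norm_def, max_lt_iff] at hp
  obtain ⟨hz₀, hw₀⟩ := hp
  -- frequently z is good and small
  have hfreq : ∃ᶠ z in 𝓝 z₀, z ∈ G ∩ {z | ‖z‖ < R/2} := by
    have h1 : ∃ᶠ z in 𝓝 z₀, z ∈ G := mem_closure_iff_frequently.1 (hdense z₀ hz₀)
    have h2 : ∀ᶠ z in 𝓝 z₀, ‖z‖ < R/2 := by
      have : ball (0 : Fin n → ℂ) (R/2) ∈ 𝓝 z₀ :=
        (isOpen_ball).mem_nhds (mem_ball_zero_iff.2 hz₀)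
      filter_upwards [this] with z hz using mem_ball_zero_iff.1 hz
    exact h1.and_eventually h2
  have hcAt : ContinuousAt (fun z => g z w₀) z₀ := by
    have hmem' : ((z₀, w₀) : (Fin n → ℂ) × ℂ) ∈ ball 0 r1 := by
      rw [mem_ball_zero_iff, Prod.norm_def]
      exact max_lt (by linarith) (by linarith)
    exact (AnalyticAt.comp
      (f := fun z : Fin n → ℂ => ((z, w₀) : (Fin n → ℂ) × ℂ))
      (Hg _ hmem') (analyticAt_id.prod analyticAt_const)).continuousAt
  have hcl : z₀ ∈ closure (G ∩ {z | ‖z‖ < R/2}) := mem_closure_iff_frequently.2 hfreq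
  have : g z₀ w₀ ∈ closure ({0} : Set ℂ) := by
    apply (hcAt.continuousWithinAt).mem_closure hcl
    rintro z ⟨hzG, hzlt⟩
    obtain ⟨χ₁, hχ₁, hne⟩ := hzG
    exact claim z hzlt ⟨χ₁, hχ₁, hne⟩ w₀ hw₀
  simpa using this

lemma normal_local_inj {n : ℕ} (Q' : (Fin n → ℂ) → (Fin n → ℂ) → ℂ → ℂ)
    (hA : AnalyticAt ℂ (fun q : (Fin n → ℂ) × (Fin n → ℂ) × ℂ => Q' q.1 q.2.1 q.2.2) 0)
    (hN : ∀ᶠ p in 𝓝 (0 : (Fin n → ℂ) × (Fin n → ℂ) × ℂ),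
      Q' 0 p.2.1 p.2.2 = p.2.2 ∧ Q' p.1 0 p.2.2 = p.2.2) :
    ∃ s ∈ 𝓝 (0 : (Fin n → ℂ) × (Fin n → ℂ) × ℂ),
      Set.InjOn (fun p : (Fin n → ℂ) × (Fin n → ℂ) × ℂ =>
        ((p.1, p.2.1, Q' p.1 p.2.1 p.2.2) : (Fin n → ℂ) × (Fin n → ℂ) × ℂ)) s := by
  have hd : DifferentiableAt ℂ
      (fun q : (Fin n → ℂ) × (Fin n → ℂ) × ℂ => Q' q.1 q.2.1 q.2.2) 0 := hA.differentiableAt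
  set L : ((Fin n → ℂ) × (Fin n → ℂ) × ℂ) →L[ℂ] ℂ :=
    fderiv ℂ (fun q : (Fin n → ℂ) × (Fin n → ℂ) × ℂ => Q' q.1 q.2.1 q.2.2) 0 with hLdef
  set ι1 : (Fin n → ℂ) →L[ℂ] ((Fin n → ℂ) × (Fin n → ℂ) × ℂ) :=
    (ContinuousLinearMap.id ℂ (Fin n → ℂ)).prod 0 with hι1def
  set ι2 : (Fin n → ℂ) →L[ℂ] ((Fin n → ℂ) × (Fin n → ℂ) × ℂ) :=
    ContinuousLinearMap.prod 0 ((ContinuousLinearMap.id ℂ (Fin n → ℂ)).prod 0) with hι2def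
  set ι3 : ℂ →L[ℂ] ((Fin n → ℂ) × (Fin n → ℂ) × ℂ) :=
    ContinuousLinearMap.prod 0 (ContinuousLinearMap.prod 0 (ContinuousLinearMap.id ℂ ℂ))
    with hι3def
  have hι1app : ∀ a : Fin n → ℂ, ι1 a = ((a, 0, 0) : (Fin n → ℂ) × (Fin n → ℂ) × ℂ) :=
    fun a => by
    simp [hι1def, ContinuousLinearMap.prod_apply, Prod.ext_iff]
  have hι2app : ∀ a : Fin n → ℂ, ι2 a = ((0, a, 0) : (Fin n → ℂ) × (Fin n → ℂ) × ℂ) :=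
    fun a => by
    simp [hι2def, ContinuousLinearMap.prod_apply, Prod.ext_iff]
  have hι3app : ∀ t : ℂ, ι3 t = ((0, 0, t) : (Fin n → ℂ) × (Fin n → ℂ) × ℂ) :=
    fun t => by
    simp [hι3def, ContinuousLinearMap.prod_apply, Prod.ext_iff]
  have hc1 : HasFDerivAt (fun a : Fin n → ℂ => Q' (ι1 a).1 (ι1 a).2.1 (ι1 a).2.2)
      (L.comp ι1) 0 :=
    HasFDerivAt.comp (g := fun q : (Fin n → ℂ) × (Fin n → ℂ) × ℂ => Q' q.1 q.2.1 q.2.2)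
      (f := fun a : (Fin n → ℂ) => ι1 a) 0 (by simp only [map_zero]; exact hd.hasFDerivAt)
      ι1.hasFDerivAt
  have hc2 : HasFDerivAt (fun a : Fin n → ℂ => Q' (ι2 a).1 (ι2 a).2.1 (ι2 a).2.2)
      (L.comp ι2) 0 :=
    HasFDerivAt.comp (g := fun q : (Fin n → ℂ) × (Fin n → ℂ) × ℂ => Q' q.1 q.2.1 q.2.2)
      (f := fun a : (Fin n → ℂ) => ι2 a) 0 (by simp only [map_zero]; exact hd.hasFDerivAt)
      ι2.hasFDerivAt
  have hc3 : HasFDerivAt (fun t : ℂ => Q' (ι3 t).1 (ι3 t).2.1 (ι3 t).2.2)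
      (L.comp ι3) 0 :=
    HasFDerivAt.comp (g := fun q : (Fin n → ℂ) × (Fin n → ℂ) × ℂ => Q' q.1 q.2.1 q.2.2)
      (f := fun t : ℂ => ι3 t) 0 (by simp only [map_zero]; exact hd.hasFDerivAt)
      ι3.hasFDerivAt
  have hz1 : HasFDerivAt (fun a : Fin n → ℂ => Q' (ι1 a).1 (ι1 a).2.1 (ι1 a).2.2)
      (0 : (Fin n → ℂ) →L[ℂ] ℂ) 0 := by
    have hev : (fun a : Fin n → ℂ => Q' (ι1 a).1 (ι1 a).2.1 (ι1 a).2.2)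
        =ᶠ[𝓝 (0 : Fin n → ℂ)] fun _ => (0 : ℂ) := by
      have T : Tendsto (fun a : Fin n → ℂ => ι1 a) (𝓝 0) (𝓝 0) :=
        ι1.continuous.tendsto' 0 0 (map_zero ι1)
      filter_upwards [T.eventually hN] with a ha
      have h2 := ha.2
      rw [hι1app a]
      rw [hι1app a] at h2
      simpa using h2
    exact (hasFDerivAt_const (0 : ℂ) (0 : Fin n → ℂ)).congr_of_eventuallyEq hev
  have hz2 : HasFDerivAt (fun a : Fin n → ℂ => Q' (ι2 a).1 (ι2 a).2.1 (ι2 a).2.2)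
      (0 : (Fin n → ℂ) →L[ℂ] ℂ) 0 := by
    have hev : (fun a : Fin n → ℂ => Q' (ι2 a).1 (ι2 a).2.1 (ι2 a).2.2)
        =ᶠ[𝓝 (0 : Fin n → ℂ)] fun _ => (0 : ℂ) := by
      have T : Tendsto (fun a : Fin n → ℂ => ι2 a) (𝓝 0) (𝓝 0) :=
        ι2.continuous.tendsto' 0 0 (map_zero ι2)
      filter_upwards [T.eventually hN] with a ha
      have h1 := ha.1
      rw [hι2app a]
      rw [hι2app a] at h1
      simpa using h1
    exact (hasFDerivAt_const (0 : ℂ) (0 : Fin n → ℂ)).congr_of_eventuallyEq hev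
  have hz3 : HasFDerivAt (fun t : ℂ => Q' (ι3 t).1 (ι3 t).2.1 (ι3 t).2.2)
      (ContinuousLinearMap.id ℂ ℂ) 0 := by
    have hev : (fun t : ℂ => Q' (ι3 t).1 (ι3 t).2.1 (ι3 t).2.2)
        =ᶠ[𝓝 (0 : ℂ)] fun t => t := by
      have T : Tendsto (fun t : ℂ => ι3 t) (𝓝 0) (𝓝 0) :=
        ι3.continuous.tendsto' 0 0 (map_zero ι3)
      filter_upwards [T.eventually hN] with t ht
      have h1 := ht.1
      rw [hι3app t]
      rw [hι3app t] at h1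
      simpa using h1
    exact (hasFDerivAt_id (0 : ℂ)).congr_of_eventuallyEq hev
  have hL1 : L.comp ι1 = 0 := hc1.unique hz1
  have hL2 : L.comp ι2 = 0 := hc2.unique hz2
  have hL3 : L.comp ι3 = ContinuousLinearMap.id ℂ ℂ := hc3.unique hz3
  have hL : ∀ v : (Fin n → ℂ) × (Fin n → ℂ) × ℂ, L v = v.2.2 := by
    intro v
    have hsplit : ι1 v.1 + ι2 v.2.1 + ι3 v.2.2 = v := by
      rw [hι1app, hι2app, hι3app]
      simp [Prod.ext_iff]
    calc L v = L (ι1 v.1 + ι2 v.2.1 + ι3 v.2.2) := by rw [hsplit]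
      _ = L (ι1 v.1) + L (ι2 v.2.1) + L (ι3 v.2.2) := by rw [map_add, map_add]
      _ = (L.comp ι1) v.1 + (L.comp ι2) v.2.1 + (L.comp ι3) v.2.2 := rfl
      _ = 0 + 0 + v.2.2 := by rw [hL1, hL2, hL3]; rfl
      _ = v.2.2 := by ring
  have hQs : HasStrictFDerivAt
      (fun q : (Fin n → ℂ) × (Fin n → ℂ) × ℂ => Q' q.1 q.2.1 q.2.2) L 0 :=
    (hA.contDiffAt (n := 1)).hasStrictFDerivAt one_ne_zero
  set A : ((Fin n → ℂ) × (Fin n → ℂ) × ℂ) →L[ℂ] ((Fin n → ℂ) × (Fin n → ℂ) × ℂ) :=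
    (ContinuousLinearMap.fst ℂ (Fin n → ℂ) ((Fin n → ℂ) × ℂ)).prod
      ((((ContinuousLinearMap.fst ℂ (Fin n → ℂ) ℂ).comp
        (ContinuousLinearMap.snd ℂ (Fin n → ℂ) ((Fin n → ℂ) × ℂ)))).prod L) with hAdef
  have hΦ : HasStrictFDerivAt (fun p : (Fin n → ℂ) × (Fin n → ℂ) × ℂ =>
      ((p.1, p.2.1, Q' p.1 p.2.1 p.2.2) : (Fin n → ℂ) × (Fin n → ℂ) × ℂ)) A 0 := by
    apply HasStrictFDerivAt.prodMk
    · exact (ContinuousLinearMap.fst ℂ (Fin n → ℂ) ((Fin n → ℂ) × ℂ)).hasStrictFDerivAt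
    · apply HasStrictFDerivAt.prodMk
      · exact ((ContinuousLinearMap.fst ℂ (Fin n → ℂ) ℂ).comp
          (ContinuousLinearMap.snd ℂ (Fin n → ℂ) ((Fin n → ℂ) × ℂ))).hasStrictFDerivAt
      · exact hQs
  have hAid : A = ↑(ContinuousLinearEquiv.refl ℂ ((Fin n → ℂ) × (Fin n → ℂ) × ℂ)) := by
    refine ContinuousLinearMap.ext fun v => ?_
    have h1 : A v = ((v.1, v.2.1, L v) : (Fin n → ℂ) × (Fin n → ℂ) × ℂ) := rfl
    rw [h1, hL v]
    rfl
  rw [hAid] at hΦ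
  refine ⟨(hΦ.toOpenPartialHomeomorph _).source,
    (hΦ.toOpenPartialHomeomorph _).open_source.mem_nhds hΦ.mem_toOpenPartialHomeomorph_source, ?_⟩
  have hinj := (hΦ.toOpenPartialHomeomorph _).injOn
  rw [hΦ.toOpenPartialHomeomorph_coe] at hinj
  exact hinj

/-- Lemma 2.1: if `M` is of finite type at `0` and `M'` of infinite type at
`0`, then every HSPM from `(ℳ,0)` to `(ℳ',0)` has vanishing transversal components; conversely
any pair `f, f̃` of holomorphic maps vanishing at `0` gives rise to the HSPM `(f,0,f̃,0)`. -/
theorem statement7 (n : ℕ) (hn : 1 ≤ n)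
    (Q Q' : (Fin n → ℂ) → (Fin n → ℂ) → ℂ → ℂ)
    (hQ : IsRealNormalDF Q) (hQ' : IsRealNormalDF Q')
    (hM : FiniteType Q)
    (hM' : ∀ᶠ p in 𝓝 (0 : (Fin n → ℂ) × (Fin n → ℂ)), Q' p.1 p.2 0 = 0) :
    (∀ (f ft : (Fin n → ℂ) → ℂ → Fin n → ℂ) (g gt : (Fin n → ℂ) → ℂ → ℂ),
      IsHSPM Q Q' f g ft gt →
        (∀ᶠ p in 𝓝 (0 : (Fin n → ℂ) × ℂ), g p.1 p.2 = 0) ∧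
        (∀ᶠ p in 𝓝 (0 : (Fin n → ℂ) × ℂ), gt p.1 p.2 = 0)) ∧
    (∀ f ft : (Fin n → ℂ) → ℂ → Fin n → ℂ,
      (∀ᶠ p in 𝓝 (0 : (Fin n → ℂ) × ℂ),
        AnalyticAt ℂ (fun q : (Fin n → ℂ) × ℂ => f q.1 q.2) p) →
      (∀ᶠ p in 𝓝 (0 : (Fin n → ℂ) × ℂ),
        AnalyticAt ℂ (fun q : (Fin n → ℂ) × ℂ => ft q.1 q.2) p) →
      f 0 0 = 0 → ft 0 0 = 0 →
      IsHSPM Q Q' f (fun _ _ => 0) ft (fun _ _ => 0)) := by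

  classical
  -- basic analyticity / continuity facts for Q
  have hQan : AnalyticAt ℂ
      (fun q : (Fin n → ℂ) × (Fin n → ℂ) × ℂ => Q q.1 q.2.1 q.2.2) 0 := hQ.1.1.self_of_nhds
  have hQ000 : Q 0 0 0 = 0 := by
    have h := hQ.1.2.self_of_nhds
    simpa using h.1
  have hQT : Tendsto (fun q : (Fin n → ℂ) × (Fin n → ℂ) × ℂ => Q q.1 q.2.1 q.2.2)
      (𝓝 0) (𝓝 0) := by
    have h := hQan.continuousAt.tendsto
    simpa [hQ000] using h
  constructor
  · -- forward direction
    rintro f ft g gt ⟨haf, hag, haft, hagt, hf0, hg0, hft0, hgt0, hEq⟩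
    have hfT : Tendsto (fun q : (Fin n → ℂ) × ℂ => f q.1 q.2) (𝓝 0) (𝓝 0) := by
      have h := haf.self_of_nhds.continuousAt.tendsto
      simpa [hf0] using h
    have hftT : Tendsto (fun q : (Fin n → ℂ) × ℂ => ft q.1 q.2) (𝓝 0) (𝓝 0) := by
      have h := haft.self_of_nhds.continuousAt.tendsto
      simpa [hft0] using h
    have hgtT : Tendsto (fun q : (Fin n → ℂ) × ℂ => gt q.1 q.2) (𝓝 0) (𝓝 0) := by
      have h := hagt.self_of_nhds.continuousAt.tendsto
      simpa [hgt0] using h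
    -- Step 1 : gt (χ, 0) = 0 near 0
    have T1 : Tendsto (fun χ : Fin n → ℂ => (((0 : Fin n → ℂ), χ, (0:ℂ)) :
        (Fin n → ℂ) × (Fin n → ℂ) × ℂ)) (𝓝 0) (𝓝 0) :=
      Continuous.tendsto' (continuous_const.prodMk (continuous_id.prodMk continuous_const))
        _ _ rfl
    have step1 : ∀ᶠ χ in 𝓝 (0 : Fin n → ℂ), gt χ 0 = 0 := by
      have Tpair : Tendsto (fun χ : Fin n → ℂ => ((χ, (0:ℂ)) : (Fin n → ℂ) × ℂ))
          (𝓝 0) (𝓝 0) :=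
        Continuous.tendsto' (continuous_id.prodMk continuous_const) _ _ rfl
      have Tft : Tendsto (fun χ : Fin n → ℂ => (((0 : Fin n → ℂ), ft χ 0, gt χ 0) :
          (Fin n → ℂ) × (Fin n → ℂ) × ℂ)) (𝓝 0) (𝓝 0) :=
        tendsto_const_nhds.prodMk_nhds ((hftT.comp Tpair).prodMk_nhds (hgtT.comp Tpair))
      filter_upwards [T1.eventually hEq, T1.eventually hQ.1.2, Tft.eventually hQ'.1.2]
        with χ h1 h2 h3
      try dsimp only at h1 h2 h3
      rw [h2.1, hf0, hg0] at h1
      exact h3.1.symm.trans h1.symm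
    -- Step 2 : g (z, Q(z,χ,0)) = 0 near 0
    have T2 : Tendsto (fun p : (Fin n → ℂ) × (Fin n → ℂ) =>
        ((p.1, p.2, (0:ℂ)) : (Fin n → ℂ) × (Fin n → ℂ) × ℂ)) (𝓝 0) (𝓝 0) :=
      Continuous.tendsto' (continuous_fst.prodMk (continuous_snd.prodMk continuous_const))
        _ _ rfl
    have TQ2 : Tendsto (fun p : (Fin n → ℂ) × (Fin n → ℂ) => Q p.1 p.2 0) (𝓝 0) (𝓝 0) :=
      hQT.comp T2
    have Tf2 : Tendsto (fun p : (Fin n → ℂ) × (Fin n → ℂ) => f p.1 (Q p.1 p.2 0))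
        (𝓝 0) (𝓝 0) :=
      hfT.comp ((Continuous.tendsto' continuous_fst _ _ rfl).prodMk_nhds TQ2)
    have Tft2 : Tendsto (fun p : (Fin n → ℂ) × (Fin n → ℂ) => ft p.2 0) (𝓝 0) (𝓝 0) :=
      hftT.comp (Continuous.tendsto' (continuous_snd.prodMk continuous_const) _ _ rfl)
    have Tsnd : Tendsto (fun p : (Fin n → ℂ) × (Fin n → ℂ) => p.2) (𝓝 0) (𝓝 0) :=
      Continuous.tendsto' continuous_snd _ _ rfl
    have step2 : ∀ᶠ p in 𝓝 (0 : (Fin n → ℂ) × (Fin n → ℂ)), g p.1 (Q p.1 p.2 0) = 0 := by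
      filter_upwards [T2.eventually hEq, Tsnd.eventually step1,
        (Tf2.prodMk_nhds Tft2).eventually hM'] with p h1 h2 h3
      try dsimp only at h1 h2 h3
      rw [h2] at h1
      rw [h1]
      exact h3
    -- Step 3 : g vanishes identically near 0
    have hQn2 : ∀ᶠ p in 𝓝 (0 : (Fin n → ℂ) × (Fin n → ℂ) × ℂ), Q p.1 0 p.2.2 = p.2.2 :=
      hQ.1.2.mono fun p h => h.2
    have step3 : ∀ᶠ p in 𝓝 (0 : (Fin n → ℂ) × ℂ), g p.1 p.2 = 0 :=
      gzero_of_comp g Q hag hQ.1.1 hQn2 hM step2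
    refine ⟨step3, ?_⟩
    -- Step 4 : gt vanishes identically near 0
    obtain ⟨s, hs, hinj⟩ := normal_local_inj Q' hQ'.1.1.self_of_nhds hQ'.1.2
    have hsve : ∀ᶠ x in 𝓝 (0 : (Fin n → ℂ) × (Fin n → ℂ) × ℂ), x ∈ s := hs
    have T3 : Tendsto (fun p : (Fin n → ℂ) × ℂ =>
        (((0 : Fin n → ℂ), p.1, p.2) : (Fin n → ℂ) × (Fin n → ℂ) × ℂ)) (𝓝 0) (𝓝 0) :=
      Continuous.tendsto' (continuous_const.prodMk (continuous_fst.prodMk continuous_snd))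
        _ _ rfl
    have Tz : Tendsto (fun p : (Fin n → ℂ) × ℂ => (((0 : Fin n → ℂ), p.2) :
        (Fin n → ℂ) × ℂ)) (𝓝 0) (𝓝 0) :=
      Continuous.tendsto' (continuous_const.prodMk continuous_snd) _ _ rfl
    have Tf3 : Tendsto (fun p : (Fin n → ℂ) × ℂ => f 0 p.2) (𝓝 0) (𝓝 0) := hfT.comp Tz
    have Tp1 : Tendsto (fun p : (Fin n → ℂ) × ℂ =>
        ((f 0 p.2, ft p.1 p.2, gt p.1 p.2) : (Fin n → ℂ) × (Fin n → ℂ) × ℂ)) (𝓝 0) (𝓝 0) :=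
      Tf3.prodMk_nhds (hftT.prodMk_nhds hgtT)
    have Tp2 : Tendsto (fun p : (Fin n → ℂ) × ℂ =>
        ((f 0 p.2, ft p.1 p.2, (0:ℂ)) : (Fin n → ℂ) × (Fin n → ℂ) × ℂ)) (𝓝 0) (𝓝 0) :=
      Tf3.prodMk_nhds (hftT.prodMk_nhds tendsto_const_nhds)
    filter_upwards [T3.eventually hEq, T3.eventually hQ.1.2, Tz.eventually step3,
      (Tf3.prodMk_nhds hftT).eventually hM', Tp1.eventually hsve, Tp2.eventually hsve]
      with p h1 h2 h3 h4 h5 h6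
    try dsimp only at h1 h2 h3 h4 h5 h6
    rw [h2.1, h3] at h1
    have key := hinj h5 h6 (by dsimp only; rw [h4, ← h1])
    have := congrArg (fun q : (Fin n → ℂ) × (Fin n → ℂ) × ℂ => q.2.2) key
    simpa using this
  · -- converse direction
    intro f ft haf haft hf0 hft0
    have hfT : Tendsto (fun q : (Fin n → ℂ) × ℂ => f q.1 q.2) (𝓝 0) (𝓝 0) := by
      have h := haf.self_of_nhds.continuousAt.tendsto
      simpa [hf0] using h
    have hftT : Tendsto (fun q : (Fin n → ℂ) × ℂ => ft q.1 q.2) (𝓝 0) (𝓝 0) := by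
      have h := haft.self_of_nhds.continuousAt.tendsto
      simpa [hft0] using h
    refine ⟨haf, Eventually.of_forall (fun p => analyticAt_const), haft,
      Eventually.of_forall (fun p => analyticAt_const), hf0, rfl, hft0, rfl, ?_⟩
    have Tinner : Tendsto (fun p : (Fin n → ℂ) × (Fin n → ℂ) × ℂ =>
        ((p.1, Q p.1 p.2.1 p.2.2) : (Fin n → ℂ) × ℂ)) (𝓝 0) (𝓝 0) :=
      (Continuous.tendsto' continuous_fst _ _ rfl).prodMk_nhds hQT
    have Tf : Tendsto (fun p : (Fin n → ℂ) × (Fin n → ℂ) × ℂ =>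
        f p.1 (Q p.1 p.2.1 p.2.2)) (𝓝 0) (𝓝 0) := hfT.comp Tinner
    have Tft : Tendsto (fun p : (Fin n → ℂ) × (Fin n → ℂ) × ℂ => ft p.2.1 p.2.2)
        (𝓝 0) (𝓝 0) :=
      hftT.comp (Continuous.tendsto' continuous_snd _ _ rfl)
    filter_upwards [(Tf.prodMk_nhds Tft).eventually hM'] with p hp
    try dsimp only at hp ⊢
    exact hp.symm

end HSPMpaper
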